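/- Let G be a finite simple graph and let n, m be integers with 0 < n ≤ m ≤ 2n. If iso(G−S) ≤ (m/n)|S| for all subsets S ⊆ V(G), then G has a {K_{1,1}, K_{1,2}, C_m : m ≥ 3}-factor with at most ((m−n)/(m+n))|V(G)| components isomorphic to K_{1,2}. -/
import Mathlib


open Finset

namespace SCF

variable {V : Type*}

/-- Degree of `v` in `F` (as the cardinality of its neighbor set). -/
noncomputable def deg [Fintype V] (F : SimpleGraph V) (v : V) : ℕ :=
  (F.neighborSet v).ncard

/-- Number of isolated vertices of `G - S`. -/
noncomputable def iso [Fintype V] (G : SimpleGraph V) (S : Set V) : ℕ :=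
  {v | v ∉ S ∧ ∀ w, G.Adj v w → w ∈ S}.ncard

/-- The component of `v` in `F` is a single edge `K_{1,1}`. -/
def IsK11Comp [Fintype V] (F : SimpleGraph V) (v : V) : Prop :=
  deg F v = 1 ∧ ∀ w, F.Adj v w → deg F w = 1

/-- The component of `v` in `F` is a path on three vertices `K_{1,2}`. -/
def IsK12Comp [Fintype V] (F : SimpleGraph V) (v : V) : Prop :=
  ∃ c a b, a ≠ b ∧ F.Adj c a ∧ F.Adj c b ∧ deg F c = 2 ∧ deg F a = 1 ∧ deg F b = 1 ∧
    (v = c ∨ v = a ∨ v = b)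

/-- The component of `v` in `F` is a cycle (2-regular connected, so length ≥ 3). -/
def IsCycleComp [Fintype V] (F : SimpleGraph V) (v : V) : Prop :=
  ∀ w, F.Reachable v w → deg F w = 2

/-- The component of `v` in `F` is an odd cycle. -/
def IsOddCycleComp [Fintype V] (F : SimpleGraph V) (v : V) : Prop :=
  IsCycleComp F v ∧ Odd {w | F.Reachable v w}.ncard

/-- The component of `v` in `F` is a star `K_{1,i}` for some `i ≥ 1`. -/
def IsStarComp [Fintype V] (F : SimpleGraph V) (v : V) : Prop :=
  ∃ c, (v = c ∨ F.Adj c v) ∧ 0 < deg F c ∧ ∀ w, F.Adj c w → deg F w = 1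

/-- The component of `v` in `F` is a star `K_{1,i}` with `1 ≤ i ≤ n`. -/
def IsStarAtMostComp [Fintype V] (F : SimpleGraph V) (n : ℕ) (v : V) : Prop :=
  ∃ c, (v = c ∨ F.Adj c v) ∧ 0 < deg F c ∧ deg F c ≤ n ∧ ∀ w, F.Adj c w → deg F w = 1

/-- `F` is a `{K_{1,1}, C_m : m ≥ 3}`-factor of `G`. -/
def IsK11CycleFactor [Fintype V] (G F : SimpleGraph V) : Prop :=
  F ≤ G ∧ ∀ v, IsK11Comp F v ∨ IsCycleComp F v

/-- `F` is a `{K_{1,1}, K_{1,2}, C_m : m ≥ 3}`-factor of `G`. -/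
def IsK11K12CycleFactor [Fintype V] (G F : SimpleGraph V) : Prop :=
  F ≤ G ∧ ∀ v, IsK11Comp F v ∨ IsK12Comp F v ∨ IsCycleComp F v

/-- Number of `K_{1,2}`-components of `F`, counted by their centers. -/
noncomputable def countK12 [Fintype V] (F : SimpleGraph V) : ℕ :=
  {v | deg F v = 2 ∧ ∀ w, F.Adj v w → deg F w = 1}.ncard

/-- `min(G, K_{1,2})`: the minimum number of `K_{1,2}`-components over all
`{K_{1,1}, K_{1,2}, C_m : m ≥ 3}`-factors of `G`. -/
noncomputable def minK12 [Fintype V] (G : SimpleGraph V) : ℕ :=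
  sInf {t | ∃ F, IsK11K12CycleFactor G F ∧ countK12 F = t}

/-- `f` is a fractional matching of `G`. -/
def IsFracMatching [Fintype V] [DecidableEq V] (G : SimpleGraph V) [DecidableRel G.Adj]
    (f : Sym2 V → ℝ) : Prop :=
  (∀ e, 0 ≤ f e ∧ f e ≤ 1) ∧ (∀ e, e ∉ G.edgeSet → f e = 0) ∧
    ∀ v : V, ∑ e ∈ G.edgeFinset, (if v ∈ e then f e else 0) ≤ 1

/-- Total weight of a fractional matching. -/
def weight [Fintype V] [DecidableEq V] (G : SimpleGraph V) [DecidableRel G.Adj]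
    (f : Sym2 V → ℝ) : ℝ :=
  ∑ e ∈ G.edgeFinset, f e

/-- The fractional matching number `μ_f(G)`. -/
noncomputable def nuF [Fintype V] [DecidableEq V] (G : SimpleGraph V) [DecidableRel G.Adj] : ℝ :=
  sSup (weight G '' {f | IsFracMatching G f})

/-- `f` is a maximum fractional matching of `G`. -/
def IsMaxFracMatching [Fintype V] [DecidableEq V] (G : SimpleGraph V) [DecidableRel G.Adj]
    (f : Sym2 V → ℝ) : Prop :=
  IsFracMatching G f ∧ weight G f = nuF G

/-- `s` is an independent set of vertices of `G`. -/
def IsIndepSet (G : SimpleGraph V) (s : Set V) : Prop :=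
  ∀ ⦃u⦄, u ∈ s → ∀ ⦃w⦄, w ∈ s → ¬ G.Adj u w

/-- The independence number `α(G)`. -/
noncomputable def alpha [Fintype V] (G : SimpleGraph V) : ℕ :=
  sSup {n | ∃ s : Set V, IsIndepSet G s ∧ s.ncard = n}

/-- `G` has a proper edge coloring with `k` colors. -/
def HasProperEdgeColoring (G : SimpleGraph V) (k : ℕ) : Prop :=
  ∃ c : Sym2 V → Fin k, ∀ e₁ ∈ G.edgeSet, ∀ e₂ ∈ G.edgeSet,
    e₁ ≠ e₂ → ∀ v : V, v ∈ e₁ → v ∈ e₂ → c e₁ ≠ c e₂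

/-- The chromatic index `χ'(G)`: the minimum number of colors (equivalently matchings)
needed to properly color the edges of `G`. -/
noncomputable def chromIdx (G : SimpleGraph V) : ℕ :=
  sInf {k | HasProperEdgeColoring G k}

/-- `G` is a `k`-critical graph. -/
def IsCriticalWith [Fintype V] (G : SimpleGraph V) [DecidableRel G.Adj] (k : ℕ) : Prop :=
  2 ≤ k ∧ G.maxDegree = k ∧ chromIdx G = k + 1 ∧
    ∀ H : SimpleGraph V, H < G → chromIdx H ≤ k

/-- `G` is an edge-chromatic critical graph. -/
def IsCritical [Fintype V] (G : SimpleGraph V) [DecidableRel G.Adj] : Prop :=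
  ∃ k, IsCriticalWith G k

/-- `G` is factor-critical: deleting any vertex leaves a graph with a perfect matching. -/
def IsFactorCritical (G : SimpleGraph V) : Prop :=
  ∀ v : V, ∃ M : G.Subgraph, M.verts = {v}ᶜ ∧ M.IsMatching

end SCF

set_option linter.unusedSectionVars false
namespace Stmt10Aux

variable {V : Type*} [Fintype V] [DecidableEq V] (G : SimpleGraph V) [DecidableRel G.Adj]

/-- neighborhood of a finset -/
def nbr (W : Finset V) : Finset V := W.biUnion (fun w => G.neighborFinset w)

/-- the "deleted" region -/
def Vd (Wst : Finset V) : Finset V := univ \ (nbr G Wst ∪ Wst)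

def Ind (W : Finset V) : Prop := ∀ a ∈ W, ∀ b ∈ W, ¬ G.Adj a b

variable {G}

lemma mem_nbr {W : Finset V} {x : V} : x ∈ nbr G W ↔ ∃ w ∈ W, G.Adj w x := by
  simp [nbr, SimpleGraph.mem_neighborFinset]

lemma nbr_mono {A B : Finset V} (h : A ⊆ B) : nbr G A ⊆ nbr G B := by
  intro x hx; rw [mem_nbr] at hx ⊢; obtain ⟨w, hw, hadj⟩ := hx; exact ⟨w, h hw, hadj⟩

lemma Ind.subset {A B : Finset V} (h : A ⊆ B) (hB : Ind G B) : Ind G A :=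
  fun a ha b hb => hB a (h ha) b (h hb)

lemma Ind.empty : Ind G (∅ : Finset V) := by intro a ha; simp at ha

/-- there is an independent set maximizing `card - card ∘ nbr` -/
lemma exists_max :
    ∃ W : Finset V, Ind G W ∧
      ∀ B : Finset V, Ind G B → (B.card : ℤ) - (nbr G B).card ≤ (W.card : ℤ) - (nbr G W).card := by
  classical
  have hne : (univ.filter (fun W => Ind G W) : Finset (Finset V)).Nonempty :=
    ⟨∅, by simp [Ind.empty]⟩
  obtain ⟨W, hW, hmax⟩ := Finset.exists_max_image _
    (fun W => (W.card : ℤ) - (nbr G W).card) hne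
  simp only [mem_filter, mem_univ, true_and] at hW hmax
  exact ⟨W, hW, fun B hB => hmax B hB⟩

section Main

variable (Wst : Finset V) (hInd : Ind G Wst)
  (hmax : ∀ B : Finset V, Ind G B → (B.card : ℤ) - (nbr G B).card
      ≤ (Wst.card : ℤ) - (nbr G Wst).card)

include hInd in
lemma W_disj_S : Disjoint Wst (nbr G Wst) := by
  rw [Finset.disjoint_left]
  intro a ha han
  rw [mem_nbr] at han
  obtain ⟨w, hw, hadj⟩ := han
  exact hInd w hw a ha hadj

include hmax in
lemma S_card_le : (nbr G Wst).card ≤ Wst.card := by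
  have h := hmax ∅ Ind.empty
  have h0 : nbr G (∅ : Finset V) = ∅ := by simp [nbr]
  rw [h0] at h
  simp at h
  omega

include hInd hmax in
/-- key bound: independent sets inside Vd expand within Vd -/
lemma key_ind (B : Finset V) (hB : Ind G B) (hBVd : B ⊆ Vd G Wst) :
    B.card ≤ (nbr G B ∩ Vd G Wst).card := by
  classical
  -- B is disjoint from Wst and from nbr Wst, and not adjacent to Wst
  have hBW : Disjoint B Wst := by
    rw [Finset.disjoint_left]; intro a ha haW
    have := hBVd ha; simp [Vd] at this; exact this.2 haW
  have hBnotadj : ∀ b ∈ B, ∀ w ∈ Wst, ¬ G.Adj b w := by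
    intro b hb w hw hadj
    have hbS : b ∈ nbr G Wst := mem_nbr.2 ⟨w, hw, hadj.symm⟩
    have := hBVd hb; simp [Vd] at this; exact this.1 hbS
  -- W ∪ B independent
  have hind : Ind G (Wst ∪ B) := by
    intro a ha b hb hadj
    rcases mem_union.1 ha with ha | ha <;> rcases mem_union.1 hb with hb | hb
    · exact hInd a ha b hb hadj
    · exact hBnotadj b hb a ha hadj.symm
    · exact hBnotadj a ha b hb hadj
    · exact hB a ha b hb hadj
  have hcard : (Wst ∪ B).card = Wst.card + B.card := by
    rw [Finset.card_union_of_disjoint hBW.symm]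
  have hnbr_sub : nbr G (Wst ∪ B) ⊆ nbr G Wst ∪ (nbr G B ∩ Vd G Wst ∪ (nbr G B ∩ Wst)) := by
    intro x hx
    rw [mem_nbr] at hx
    obtain ⟨w, hw, hadj⟩ := hx
    rcases mem_union.1 hw with hw | hw
    · exact mem_union_left _ (mem_nbr.2 ⟨w, hw, hadj⟩)
    · -- x is a neighbor of B; x ∉ nbr Wst ∪ ... decide by cases
      have hxB : x ∈ nbr G B := mem_nbr.2 ⟨w, hw, hadj⟩
      by_cases hxS : x ∈ nbr G Wst
      · exact mem_union_left _ hxS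
      · by_cases hxW : x ∈ Wst
        · exact mem_union_right _ (mem_union_right _ (mem_inter.2 ⟨hxB, hxW⟩))
        · refine mem_union_right _ (mem_union_left _ (mem_inter.2 ⟨hxB, ?_⟩))
          simp [Vd, hxS, hxW]
  -- but nbr B ∩ Wst is empty
  have hempty : nbr G B ∩ Wst = ∅ := by
    rw [Finset.eq_empty_iff_forall_notMem]
    intro x hx
    rw [mem_inter, mem_nbr] at hx
    obtain ⟨⟨b, hb, hadj⟩, hxW⟩ := hx
    exact hBnotadj b hb x hxW hadj
  rw [hempty, union_empty] at hnbr_sub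
  have h1 : (nbr G (Wst ∪ B)).card ≤ (nbr G Wst).card + (nbr G B ∩ Vd G Wst).card :=
    le_trans (card_le_card hnbr_sub) (card_union_le _ _)
  have h2 := hmax (Wst ∪ B) hind
  rw [hcard] at h2
  -- (Wst.card + B.card : ℤ) - nbr(W∪B) ≤ Wst.card - nbr Wst
  have h3 : (nbr G Wst).card ≤ (nbr G (Wst ∪ B)).card := by
    apply card_le_card; exact nbr_mono subset_union_left
  push_cast at h2
  omega

include hInd hmax in
/-- Hall condition inside Vd (Claim D style reduction to the independent case) -/
lemma key_all (A : Finset V) (hAVd : A ⊆ Vd G Wst) :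
    A.card ≤ (nbr G A ∩ Vd G Wst).card := by
  classical
  set A1 : Finset V := A \ nbr G A with hA1
  have hA1ind : Ind G A1 := by
    intro a ha b hb hadj
    have : b ∈ nbr G A := mem_nbr.2 ⟨a, (mem_sdiff.1 ha).1, hadj⟩
    exact (mem_sdiff.1 hb).2 this
  have hA1Vd : A1 ⊆ Vd G Wst := fun x hx => hAVd (mem_sdiff.1 hx).1
  have hkey := key_ind Wst hInd hmax A1 hA1ind hA1Vd
  -- nbr A ∩ Vd ⊇ (A ∩ nbr A) ∪ (nbr A1 ∩ Vd), disjointly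
  have hsub : (A ∩ nbr G A) ∪ (nbr G A1 ∩ Vd G Wst) ⊆ nbr G A ∩ Vd G Wst := by
    intro x hx
    rcases mem_union.1 hx with hx | hx
    · rw [mem_inter] at hx
      exact mem_inter.2 ⟨hx.2, hAVd hx.1⟩
    · rw [mem_inter] at hx ⊢
      exact ⟨nbr_mono (sdiff_subset) hx.1, hx.2⟩
  have hdisj : Disjoint (A ∩ nbr G A) (nbr G A1 ∩ Vd G Wst) := by
    rw [Finset.disjoint_left]
    intro x hx hx'
    have hxA : x ∈ A := (mem_inter.1 hx).1
    have : x ∈ nbr G A1 := (mem_inter.1 hx').1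
    rw [mem_nbr] at this
    obtain ⟨p, hp, hadj⟩ := this
    -- p ∈ A1 has neighbor x ∈ A, so p ∈ nbr A, contradiction
    have : p ∈ nbr G A := mem_nbr.2 ⟨x, hxA, hadj.symm⟩
    exact (mem_sdiff.1 hp).2 this
  have hcards : (A ∩ nbr G A).card + (nbr G A1 ∩ Vd G Wst).card ≤ (nbr G A ∩ Vd G Wst).card := by
    rw [← Finset.card_union_of_disjoint hdisj]
    exact card_le_card hsub
  have hsplit : (A ∩ nbr G A).card + A1.card = A.card := by
    rw [hA1]
    exact Finset.card_inter_add_card_sdiff A (nbr G A)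
  omega

include hInd hmax in
/-- a permutation of Vd moving along edges -/
lemma exists_sigma : ∃ σ : {x // x ∈ Vd G Wst} ≃ {x // x ∈ Vd G Wst},
    ∀ v, G.Adj v.1 (σ v).1 := by
  classical
  have hall : ∀ s : Finset {x // x ∈ Vd G Wst},
      s.card ≤ (s.biUnion (fun v => G.neighborFinset v.1 ∩ Vd G Wst)).card := by
    intro s
    have hsub : s.image Subtype.val ⊆ Vd G Wst := by
      intro x hx
      obtain ⟨v, hv, rfl⟩ := Finset.mem_image.1 hx
      exact v.2
    have hcard := key_all Wst hInd hmax (s.image Subtype.val) hsub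
    have h1 : (s.image Subtype.val).card = s.card :=
      Finset.card_image_of_injective _ Subtype.val_injective
    have h2 : nbr G (s.image Subtype.val) ∩ Vd G Wst ⊆
        s.biUnion (fun v => G.neighborFinset v.1 ∩ Vd G Wst) := by
      intro x hx
      rw [mem_inter, mem_nbr] at hx
      obtain ⟨⟨w, hw, hadj⟩, hxD⟩ := hx
      obtain ⟨v, hv, rfl⟩ := Finset.mem_image.1 hw
      exact Finset.mem_biUnion.2 ⟨v, hv, mem_inter.2 ⟨(SimpleGraph.mem_neighborFinset _ _ _).2 hadj, hxD⟩⟩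
    calc s.card = (s.image Subtype.val).card := h1.symm
      _ ≤ (nbr G (s.image Subtype.val) ∩ Vd G Wst).card := hcard
      _ ≤ _ := card_le_card h2
  obtain ⟨f, hfinj, hf⟩ := (Finset.all_card_le_biUnion_card_iff_exists_injective
      (fun v : {x // x ∈ Vd G Wst} => G.neighborFinset v.1 ∩ Vd G Wst)).1 hall
  · have hmem : ∀ v, f v ∈ Vd G Wst := fun v => (mem_inter.1 (hf v)).2
    have hadj : ∀ v, G.Adj v.1 (f v) := fun v =>
      (SimpleGraph.mem_neighborFinset _ _ _).1 (mem_inter.1 (hf v)).1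
    let g : {x // x ∈ Vd G Wst} → {x // x ∈ Vd G Wst} := fun v => ⟨f v, hmem v⟩
    have hginj : Function.Injective g := by
      intro a b hab
      apply hfinj
      exact congrArg Subtype.val hab
    exact ⟨Equiv.ofBijective g (Finite.injective_iff_bijective.1 hginj), fun v => hadj v⟩

include hInd hmax in
/-- the star assignment: each `i ∈ Wst` gets a center `φ i ∈ nbr Wst`,
each center has 1 or 2 leaves -/
lemma exists_phi (H2 : ∀ B : Finset V, Ind G B → B.card ≤ 2 * (nbr G B).card) :
    ∃ φ : {x // x ∈ Wst} → V,
      (∀ i, G.Adj i.1 (φ i)) ∧ (∀ i, φ i ∈ nbr G Wst) ∧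
      (∀ s ∈ nbr G Wst, 1 ≤ (univ.filter (fun i : {x // x ∈ Wst} => φ i = s)).card ∧
        (univ.filter (fun i : {x // x ∈ Wst} => φ i = s)).card ≤ 2) := by
  classical
  set k := 2 * (nbr G Wst).card - Wst.card with hk
  set T : ({x // x ∈ Wst} ⊕ Fin k) → Finset (V × Bool) :=
    fun x => Sum.elim (fun i => (G.neighborFinset i.1) ×ˢ (univ : Finset Bool))
      (fun _ => (nbr G Wst) ×ˢ ({false} : Finset Bool)) x with hT
  have hI2S : Wst.card ≤ 2 * (nbr G Wst).card := H2 Wst hInd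
  have hall : ∀ s : Finset ({x // x ∈ Wst} ⊕ Fin k), s.card ≤ (s.biUnion T).card := by
    intro s
    set A : Finset V := s.toLeft.image Subtype.val with hA
    have hAW : A ⊆ Wst := by
      intro x hx; obtain ⟨v, _, rfl⟩ := Finset.mem_image.1 hx; exact v.2
    have hAind : Ind G A := hInd.subset hAW
    have hAcard : A.card = s.toLeft.card := Finset.card_image_of_injective _ Subtype.val_injective
    have hsubN : (nbr G A) ×ˢ (univ : Finset Bool) ⊆ s.biUnion T := by
      intro x hx
      rw [Finset.mem_product] at hx
      obtain ⟨w, hw, hadj⟩ := mem_nbr.1 hx.1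
      obtain ⟨v, hv, rfl⟩ := Finset.mem_image.1 hw
      refine Finset.mem_biUnion.2 ⟨Sum.inl v, Finset.mem_toLeft.1 hv, ?_⟩
      simp only [hT, Sum.elim_inl, Finset.mem_product]
      exact ⟨(SimpleGraph.mem_neighborFinset _ _ _).2 hadj, hx.2⟩
    by_cases hR : s.toRight = ∅
    · have hcard : s.card = s.toLeft.card := by
        have := s.card_toLeft_add_card_toRight
        rw [hR] at this; simpa using this.symm
      have h2 : ((nbr G A) ×ˢ (univ : Finset Bool)).card = 2 * (nbr G A).card := by
        rw [Finset.card_product]; simp [mul_comm]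
      calc s.card = A.card := by rw [hcard, hAcard]
        _ ≤ 2 * (nbr G A).card := H2 A hAind
        _ = ((nbr G A) ×ˢ (univ : Finset Bool)).card := h2.symm
        _ ≤ _ := card_le_card hsubN
    · obtain ⟨j, hj⟩ := Finset.nonempty_iff_ne_empty.2 hR
      have hsubS : (nbr G Wst) ×ˢ ({false} : Finset Bool) ⊆ s.biUnion T := by
        intro x hx
        exact Finset.mem_biUnion.2 ⟨Sum.inr j, Finset.mem_toRight.1 hj, by
          simp only [hT, Sum.elim_inr]; exact hx⟩
      -- the union has card |nbr A| + |nbr Wst|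
      have hNsub : nbr G A ⊆ nbr G Wst := nbr_mono hAW
      have hbig : ((nbr G A) ×ˢ ({true} : Finset Bool)) ∪
          ((nbr G Wst) ×ˢ ({false} : Finset Bool)) ⊆ s.biUnion T := by
        apply Finset.union_subset
        · exact le_trans (Finset.product_subset_product_right (by simp)) hsubN
        · exact hsubS
      have hdisj : Disjoint ((nbr G A) ×ˢ ({true} : Finset Bool))
          ((nbr G Wst) ×ˢ ({false} : Finset Bool)) := by
        rw [Finset.disjoint_left]
        intro x hx hx'
        rw [Finset.mem_product] at hx hx'
        simp at hx hx'
        rw [hx.2] at hx'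
        simp at hx'
      have hcards : (nbr G A).card + (nbr G Wst).card ≤ (s.biUnion T).card := by
        have := card_le_card hbig
        rw [Finset.card_union_of_disjoint hdisj, Finset.card_product, Finset.card_product] at this
        simpa using this
      -- counting
      have hmaxA : A.card + (nbr G Wst).card ≤ (nbr G A).card + Wst.card := by
        have := hmax A hAind
        push_cast at this
        omega
      have hsum := s.card_toLeft_add_card_toRight
      have hRk : s.toRight.card ≤ k := by
        calc s.toRight.card ≤ (univ : Finset (Fin k)).card := card_le_univ _
          _ = k := by simp
      omega
  obtain ⟨f, hfinj, hf⟩ := (Finset.all_card_le_biUnion_card_iff_exists_injective T).1 hall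
  · -- extract φ and its properties
    set φ : {x // x ∈ Wst} → V := fun i => (f (Sum.inl i)).1 with hφ
    have hφadj : ∀ i, G.Adj i.1 (φ i) := by
      intro i
      have := hf (Sum.inl i)
      simp only [hT, Sum.elim_inl, Finset.mem_product] at this
      exact (SimpleGraph.mem_neighborFinset _ _ _).1 this.1
    have hφS : ∀ i, φ i ∈ nbr G Wst := fun i => mem_nbr.2 ⟨i.1, i.2, hφadj i⟩
    refine ⟨φ, hφadj, hφS, fun s hs => ⟨?_, ?_⟩⟩
    · -- surjectivity: (s, true) is hit by some inl i
      have hcards : (univ : Finset ({x // x ∈ Wst} ⊕ Fin k)).card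
          = ((nbr G Wst) ×ˢ (univ : Finset Bool)).card := by
        simp only [Finset.card_product, Finset.card_univ, Fintype.card_sum,
          Fintype.card_coe, Fintype.card_fin, Fintype.card_bool]
        omega
      have himg : (univ : Finset ({x // x ∈ Wst} ⊕ Fin k)).image f ⊆
          (nbr G Wst) ×ˢ (univ : Finset Bool) := by
        intro x hx
        obtain ⟨y, _, rfl⟩ := Finset.mem_image.1 hx
        rcases y with i | j
        · have := hf (Sum.inl i)
          simp only [hT, Sum.elim_inl, Finset.mem_product] at this ⊢
          refine ⟨?_, by simp⟩
          have : G.Adj i.1 (f (Sum.inl i)).1 := (SimpleGraph.mem_neighborFinset _ _ _).1 this.1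
          exact mem_nbr.2 ⟨i.1, i.2, this⟩
        · have := hf (Sum.inr j)
          simp only [hT, Sum.elim_inr, Finset.mem_product] at this ⊢
          exact ⟨this.1, by simp⟩
      have heq : (univ : Finset ({x // x ∈ Wst} ⊕ Fin k)).image f
          = (nbr G Wst) ×ˢ (univ : Finset Bool) := by
        apply Finset.eq_of_subset_of_card_le himg
        rw [Finset.card_image_of_injective _ hfinj]
        exact le_of_eq hcards.symm
      have : (s, true) ∈ (univ : Finset ({x // x ∈ Wst} ⊕ Fin k)).image f := by
        rw [heq, Finset.mem_product]; exact ⟨hs, by simp⟩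
      obtain ⟨y, _, hy⟩ := Finset.mem_image.1 this
      rcases y with i | j
      · refine Finset.card_pos.2 ⟨i, Finset.mem_filter.2 ⟨Finset.mem_univ _, ?_⟩⟩
        exact congrArg Prod.fst hy
      · exfalso
        have := hf (Sum.inr j)
        rw [hy] at this
        simp [hT] at this
    · -- fibers have size ≤ 2 : inject into Bool
      classical
      have hinj : Set.InjOn (fun i => (f (Sum.inl i)).2)
          ↑(univ.filter (fun i : {x // x ∈ Wst} => φ i = s)) := by
        intro a ha b hb hab
        simp only [Finset.coe_filter, Set.mem_setOf_eq] at ha hb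
        have h1 : f (Sum.inl a) = f (Sum.inl b) := by
          apply Prod.ext
          · rw [show (f (Sum.inl a)).1 = φ a from rfl, show (f (Sum.inl b)).1 = φ b from rfl,
              ha.2, hb.2]
          · exact hab
        have := hfinj h1
        simpa using this
      calc (univ.filter (fun i : {x // x ∈ Wst} => φ i = s)).card
          ≤ (univ : Finset Bool).card := by
            apply Finset.card_le_card_of_injOn _ (fun a _ => Finset.mem_univ _) hinj
        _ = 2 := by simp

end Main

section Build

variable (G : SimpleGraph V) [DecidableRel G.Adj] (Wst : Finset V)

/-- fibers of the star assignment -/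
def FIB (φ : {x // x ∈ Wst} → V) (s : V) : Finset {x // x ∈ Wst} :=
  univ.filter (fun i => φ i = s)

/-- the factor: stars (from `Wst` into `nbr G Wst`) plus the permutation part on `Vd` -/
def Fac (φ : {x // x ∈ Wst} → V) (e : {x // x ∈ Vd G Wst} ≃ {x // x ∈ Vd G Wst}) :
    SimpleGraph V :=
  SimpleGraph.fromRel (fun x y =>
    (∃ h : x ∈ Wst, y = φ ⟨x, h⟩) ∨ (∃ h : x ∈ Vd G Wst, y = (e ⟨x, h⟩ : V)))

variable {G Wst}

lemma mem_Vd {x : V} : x ∈ Vd G Wst ↔ x ∉ nbr G Wst ∧ x ∉ Wst := by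
  simp [Vd]

variable {φ : {x // x ∈ Wst} → V} {e : {x // x ∈ Vd G Wst} ≃ {x // x ∈ Vd G Wst}}
  (hdisj : Disjoint Wst (nbr G Wst))
  (hφS : ∀ i, φ i ∈ nbr G Wst)
  (headj : ∀ v, G.Adj v.1 (e v).1)

lemma fac_adj {x y : V} : (Fac G Wst φ e).Adj x y ↔ x ≠ y ∧
    (((∃ h : x ∈ Wst, y = φ ⟨x, h⟩) ∨ (∃ h : x ∈ Vd G Wst, y = (e ⟨x, h⟩ : V))) ∨
      ((∃ h : y ∈ Wst, x = φ ⟨y, h⟩) ∨ (∃ h : y ∈ Vd G Wst, x = (e ⟨y, h⟩ : V)))) := by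
  rw [Fac, SimpleGraph.fromRel_adj]

include hdisj hφS in
lemma nb_W {v : V} (hv : v ∈ Wst) :
    (Fac G Wst φ e).neighborSet v = {φ ⟨v, hv⟩} := by
  have hvS : v ∉ nbr G Wst := Finset.disjoint_left.1 hdisj hv
  have hvV : v ∉ Vd G Wst := fun h => (mem_Vd.1 h).2 hv
  ext y
  simp only [SimpleGraph.mem_neighborSet, Set.mem_singleton_iff, fac_adj]
  constructor
  · rintro ⟨hne, (⟨h, rfl⟩ | ⟨h, rfl⟩) | (⟨h, hy⟩ | ⟨h, hy⟩)⟩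
    · rfl
    · exact absurd h hvV
    · exact absurd (hy ▸ hφS ⟨y, h⟩) hvS
    · exact absurd (hy ▸ (e ⟨y, h⟩).2) hvV
  · rintro rfl
    have : φ ⟨v, hv⟩ ∈ nbr G Wst := hφS _
    exact ⟨fun hh => hvS (hh ▸ this), Or.inl (Or.inl ⟨hv, rfl⟩)⟩

include hdisj hφS in
lemma nb_S {s : V} (hs : s ∈ nbr G Wst) :
    (Fac G Wst φ e).neighborSet s = ↑((FIB Wst φ s).image Subtype.val) := by
  have hsW : s ∉ Wst := Finset.disjoint_right.1 hdisj hs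
  have hsV : s ∉ Vd G Wst := fun h => (mem_Vd.1 h).1 hs
  ext y
  simp only [SimpleGraph.mem_neighborSet, fac_adj, Finset.coe_image, Set.mem_image,
    Finset.mem_coe, FIB, Finset.mem_filter, Finset.mem_univ, true_and]
  constructor
  · rintro ⟨hne, (⟨h, rfl⟩ | ⟨h, rfl⟩) | (⟨h, hy⟩ | ⟨h, hy⟩)⟩
    · exact absurd h hsW
    · exact absurd h hsV
    · exact ⟨⟨y, h⟩, hy.symm, rfl⟩
    · exact absurd h (fun hh => hsV ((hy ▸ (e ⟨y, hh⟩).2 : s ∈ Vd G Wst)))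
  · rintro ⟨i, hi, rfl⟩
    refine ⟨fun hh => hsW (hh ▸ i.2), Or.inr (Or.inl ⟨i.2, ?_⟩)⟩
    rw [← hi]

include hφS headj in
lemma nb_V {v : V} (hv : v ∈ Vd G Wst) :
    (Fac G Wst φ e).neighborSet v = {(e ⟨v, hv⟩ : V), (e.symm ⟨v, hv⟩ : V)} := by
  have hvW : v ∉ Wst := (mem_Vd.1 hv).2
  have hvS : v ∉ nbr G Wst := (mem_Vd.1 hv).1
  ext y
  simp only [SimpleGraph.mem_neighborSet, fac_adj, Set.mem_insert_iff, Set.mem_singleton_iff]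
  constructor
  · rintro ⟨hne, (⟨h, rfl⟩ | ⟨h, rfl⟩) | (⟨h, hy⟩ | ⟨h, hy⟩)⟩
    · exact absurd h hvW
    · exact Or.inl rfl
    · exact absurd (hy ▸ hφS ⟨y, h⟩) hvS
    · -- y ∈ Vd with v = e ŷ, so y = e.symm v̂
      right
      have : e ⟨y, h⟩ = ⟨v, hv⟩ := Subtype.ext hy.symm
      rw [← this, Equiv.symm_apply_apply]
  · rintro (rfl | rfl)
    · exact ⟨(headj ⟨v, hv⟩).ne, Or.inl (Or.inr ⟨hv, rfl⟩)⟩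
    · refine ⟨?_, Or.inr (Or.inr ⟨(e.symm ⟨v, hv⟩).2, by rw [Equiv.apply_symm_apply]⟩)⟩
      have h2 := (headj (e.symm ⟨v, hv⟩)).ne
      rw [Equiv.apply_symm_apply] at h2
      exact fun hh => h2 hh.symm

include hdisj hφS in
lemma deg_W {v : V} (hv : v ∈ Wst) : SCF.deg (Fac G Wst φ e) v = 1 := by
  rw [SCF.deg, nb_W hdisj hφS hv, Set.ncard_singleton]

include hdisj hφS in
lemma deg_S {s : V} (hs : s ∈ nbr G Wst) :
    SCF.deg (Fac G Wst φ e) s = (FIB Wst φ s).card := by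
  rw [SCF.deg, nb_S hdisj hφS hs, Set.ncard_coe_finset,
    Finset.card_image_of_injective _ Subtype.val_injective]

include hdisj hφS headj in
lemma deg_V1 {v : V} (hv : v ∈ Vd G Wst) (h2 : e (e ⟨v, hv⟩) = ⟨v, hv⟩) :
    SCF.deg (Fac G Wst φ e) v = 1 := by
  have hsymm : (e.symm ⟨v, hv⟩ : V) = (e ⟨v, hv⟩ : V) := by
    conv_lhs => rw [← h2]
    rw [Equiv.symm_apply_apply]
  rw [SCF.deg, nb_V hφS headj hv, hsymm, Set.pair_eq_singleton, Set.ncard_singleton]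

include hdisj hφS headj in
lemma deg_V2 {v : V} (hv : v ∈ Vd G Wst) (h2 : e (e ⟨v, hv⟩) ≠ ⟨v, hv⟩) :
    SCF.deg (Fac G Wst φ e) v = 2 := by
  rw [SCF.deg, nb_V hφS headj hv]
  apply Set.ncard_pair
  intro hh
  apply h2
  have : e ⟨v, hv⟩ = e.symm ⟨v, hv⟩ := Subtype.ext hh
  rw [this, Equiv.apply_symm_apply]

include hdisj hφS in
lemma comp_star {v : V} (hv : v ∈ Wst ∨ v ∈ nbr G Wst)
    (hfib : ∀ s ∈ nbr G Wst, 1 ≤ (FIB Wst φ s).card ∧ (FIB Wst φ s).card ≤ 2) :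
    SCF.IsK11Comp (Fac G Wst φ e) v ∨ SCF.IsK12Comp (Fac G Wst φ e) v := by
  classical
  set F := Fac G Wst φ e with hF
  obtain ⟨s, hs, hvs⟩ : ∃ s, s ∈ nbr G Wst ∧ ((∃ h : v ∈ Wst, φ ⟨v, h⟩ = s) ∨ v = s) := by
    rcases hv with hv | hv
    · exact ⟨φ ⟨v, hv⟩, hφS _, Or.inl ⟨hv, rfl⟩⟩
    · exact ⟨v, hv, Or.inr rfl⟩
  -- basic facts about the star at s
  have hdeg_s : SCF.deg F s = (FIB Wst φ s).card := deg_S hdisj hφS hs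
  have hadj_si : ∀ i ∈ FIB Wst φ s, F.Adj s i.1 := by
    intro i hi
    have : (i : V) ∈ F.neighborSet s := by
      rw [hF, nb_S hdisj hφS hs]
      exact Finset.mem_coe.2 (Finset.mem_image.2 ⟨i, hi, rfl⟩)
    exact this
  have hdeg_i : ∀ i ∈ FIB Wst φ s, SCF.deg F i.1 = 1 := fun i _ => deg_W hdisj hφS i.2
  have hnb_s : ∀ w, F.Adj s w → ∃ i ∈ FIB Wst φ s, w = i.1 := by
    intro w hw
    have : w ∈ F.neighborSet s := hw
    rw [hF, nb_S hdisj hφS hs] at this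
    obtain ⟨i, hi, rfl⟩ := Finset.mem_image.1 (Finset.mem_coe.1 this)
    exact ⟨i, hi, rfl⟩
  have hnb_i : ∀ i ∈ FIB Wst φ s, ∀ w, F.Adj i.1 w → w = s := by
    intro i hi w hw
    have : w ∈ F.neighborSet i.1 := hw
    rw [hF, nb_W hdisj hφS i.2] at this
    rw [Set.mem_singleton_iff] at this
    rw [this]
    exact (Finset.mem_filter.1 hi).2
  rcases (hfib s hs) with ⟨h1, h2⟩
  -- v's position
  have hvpos : v = s ∨ ∃ hvW : v ∈ Wst, (⟨v, hvW⟩ : {x // x ∈ Wst}) ∈ FIB Wst φ s := by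
    rcases hvs with ⟨hW, hphi⟩ | rfl
    · exact Or.inr ⟨hW, Finset.mem_filter.2 ⟨Finset.mem_univ _, hphi⟩⟩
    · exact Or.inl rfl
  interval_cases hc : (FIB Wst φ s).card
  · -- card = 1 : K11
    left
    obtain ⟨i, hi⟩ := Finset.card_eq_one.1 hc
    have hiF : i ∈ FIB Wst φ s := hi ▸ Finset.mem_singleton_self i
    have hdeg_s1 : SCF.deg F s = 1 := hdeg_s
    rcases hvpos with rfl | ⟨hvW, hvF⟩
    · refine ⟨hdeg_s1, fun w hw => ?_⟩
      obtain ⟨j, hj, rfl⟩ := hnb_s w hw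
      exact hdeg_i j hj
    · have : (⟨v, hvW⟩ : {x // x ∈ Wst}) ∈ FIB Wst φ s := hvF
      refine ⟨hdeg_i _ this, fun w hw => ?_⟩
      rw [hnb_i _ this w hw]
      exact hdeg_s1
  · -- card = 2 : K12
    right
    obtain ⟨a, b, hab, habF⟩ := Finset.card_eq_two.1 hc
    have haF : a ∈ FIB Wst φ s := habF ▸ Finset.mem_insert_self a {b}
    have hbF : b ∈ FIB Wst φ s := habF ▸ Finset.mem_insert_of_mem (Finset.mem_singleton_self b)
    refine ⟨s, a.1, b.1, fun hh => hab (Subtype.ext hh), hadj_si a haF, hadj_si b hbF,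
      hdeg_s, hdeg_i a haF, hdeg_i b hbF, ?_⟩
    rcases hvpos with rfl | ⟨hvW, hvF⟩
    · exact Or.inl rfl
    · have : (⟨v, hvW⟩ : {x // x ∈ Wst}) ∈ FIB Wst φ s := hvF
      rw [habF] at this
      rcases Finset.mem_insert.1 this with hh | hh
      · exact Or.inr (Or.inl (congrArg Subtype.val hh))
      · exact Or.inr (Or.inr (congrArg Subtype.val (Finset.mem_singleton.1 hh)))

include hdisj hφS headj in
lemma comp_V {v : V} (hv : v ∈ Vd G Wst) :
    SCF.IsK11Comp (Fac G Wst φ e) v ∨ SCF.IsCycleComp (Fac G Wst φ e) v := by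
  classical
  set F := Fac G Wst φ e with hF
  by_cases h2 : e (e ⟨v, hv⟩) = ⟨v, hv⟩
  · -- K11 : pair {v, e v}
    left
    have hdv : SCF.deg F v = 1 := deg_V1 hdisj hφS headj hv h2
    refine ⟨hdv, fun w hw => ?_⟩
    have hsymm : (e.symm ⟨v, hv⟩ : V) = (e ⟨v, hv⟩ : V) := by
      conv_lhs => rw [← h2]
      rw [Equiv.symm_apply_apply]
    have : w ∈ F.neighborSet v := hw
    rw [hF, nb_V hφS headj hv, hsymm, Set.pair_eq_singleton, Set.mem_singleton_iff] at this
    subst this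
    -- w = e v̂ ; its square: e (e (e v̂)) = e v̂
    apply deg_V1 hdisj hφS headj (e ⟨v, hv⟩).2
    have : (⟨(e ⟨v, hv⟩ : V), (e ⟨v, hv⟩).2⟩ : {x // x ∈ Vd G Wst}) = e ⟨v, hv⟩ :=
      Subtype.ext rfl
    rw [this, h2]
  · -- cycle component
    right
    intro w hreach
    -- the invariant is preserved along edges
    have hstep : ∀ x y : V, F.Adj x y →
        (∃ hx : x ∈ Vd G Wst, e (e ⟨x, hx⟩) ≠ ⟨x, hx⟩) →
        (∃ hy : y ∈ Vd G Wst, e (e ⟨y, hy⟩) ≠ ⟨y, hy⟩) := by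
      intro x y hxy ⟨hx, hx2⟩
      have : y ∈ F.neighborSet x := hxy
      rw [hF, nb_V hφS headj hx] at this
      rcases this with rfl | rfl
      · refine ⟨(e ⟨x, hx⟩).2, fun hh => hx2 ?_⟩
        have hcoe : (⟨(e ⟨x, hx⟩ : V), (e ⟨x, hx⟩).2⟩ : {x // x ∈ Vd G Wst}) = e ⟨x, hx⟩ :=
          Subtype.ext rfl
        rw [hcoe] at hh
        exact e.injective hh
      · refine ⟨(e.symm ⟨x, hx⟩).2, fun hh => hx2 ?_⟩
        have hcoe : (⟨(e.symm ⟨x, hx⟩ : V), (e.symm ⟨x, hx⟩).2⟩ : {x // x ∈ Vd G Wst})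
            = e.symm ⟨x, hx⟩ := Subtype.ext rfl
        rw [hcoe, Equiv.apply_symm_apply] at hh
        exact (congrArg e hh).trans (e.apply_symm_apply _)
    have htrans : ∀ (x y : V) (p : F.Walk x y),
        (∃ hx : x ∈ Vd G Wst, e (e ⟨x, hx⟩) ≠ ⟨x, hx⟩) →
        (∃ hy : y ∈ Vd G Wst, e (e ⟨y, hy⟩) ≠ ⟨y, hy⟩) := by
      intro x y p
      induction p with
      | nil => exact id
      | cons hadj q ih => exact fun hx => ih (hstep _ _ hadj hx)
    obtain ⟨p⟩ := hreach
    obtain ⟨hw, hw2⟩ := htrans v w p ⟨hv, h2⟩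
    exact deg_V2 hdisj hφS headj hw hw2

lemma fac_le (hφadj : ∀ i, G.Adj i.1 (φ i)) (headj' : ∀ v, G.Adj v.1 (e v).1) :
    Fac G Wst φ e ≤ G := by
  intro x y hxy
  rw [fac_adj] at hxy
  obtain ⟨hne, (⟨h, rfl⟩ | ⟨h, rfl⟩) | (⟨h, hy⟩ | ⟨h, hy⟩)⟩ := hxy
  · exact hφadj ⟨x, h⟩
  · exact headj' ⟨x, h⟩
  · exact (hy ▸ hφadj ⟨y, h⟩).symm
  · exact (hy ▸ headj' ⟨y, h⟩).symm

lemma tricho (v : V) : v ∈ Wst ∨ v ∈ nbr G Wst ∨ v ∈ Vd G Wst := by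
  by_cases h1 : v ∈ Wst
  · exact Or.inl h1
  by_cases h2 : v ∈ nbr G Wst
  · exact Or.inr (Or.inl h2)
  · exact Or.inr (Or.inr (mem_Vd.2 ⟨h2, h1⟩))

include hdisj hφS headj in
lemma countK12_eq (hfib : ∀ s ∈ nbr G Wst, 1 ≤ (FIB Wst φ s).card ∧ (FIB Wst φ s).card ≤ 2) :
    SCF.countK12 (Fac G Wst φ e)
      = ((nbr G Wst).filter (fun s => (FIB Wst φ s).card = 2)).card := by
  classical
  set F := Fac G Wst φ e with hF
  have hset : {v | SCF.deg F v = 2 ∧ ∀ w, F.Adj v w → SCF.deg F w = 1}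
      = ↑((nbr G Wst).filter (fun s => (FIB Wst φ s).card = 2)) := by
    ext v
    simp only [Set.mem_setOf_eq, Finset.coe_filter, Finset.mem_coe, Set.mem_setOf_eq]
    constructor
    · rintro ⟨hdeg, hall⟩
      rcases tricho (G := G) (Wst := Wst) v with hv | hv | hv
      · rw [deg_W hdisj hφS hv] at hdeg; omega
      · refine ⟨hv, ?_⟩
        rw [deg_S hdisj hφS hv] at hdeg
        exact hdeg
      · by_cases h2 : e (e ⟨v, hv⟩) = ⟨v, hv⟩
        · rw [deg_V1 hdisj hφS headj hv h2] at hdeg; omega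
        · exfalso
          -- the neighbor e v̂ has degree 2 as well
          have hadj : F.Adj v (e ⟨v, hv⟩ : V) := by
            have : (e ⟨v, hv⟩ : V) ∈ F.neighborSet v := by
              rw [hF, nb_V hφS headj hv]; exact Or.inl rfl
            exact this
          have hw2 : e (e ⟨(e ⟨v, hv⟩ : V), (e ⟨v, hv⟩).2⟩) ≠ ⟨(e ⟨v, hv⟩ : V), (e ⟨v, hv⟩).2⟩ := by
            have hcoe : (⟨(e ⟨v, hv⟩ : V), (e ⟨v, hv⟩).2⟩ : {x // x ∈ Vd G Wst}) = e ⟨v, hv⟩ :=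
              Subtype.ext rfl
            rw [hcoe]
            intro hh
            exact h2 (e.injective hh)
          have := deg_V2 hdisj hφS headj (e ⟨v, hv⟩).2 hw2
          rw [hall _ hadj] at this
          omega
    · rintro ⟨hv, hfib2⟩
      have hvW : v ∉ Wst := Finset.disjoint_right.1 hdisj hv
      refine ⟨by rw [deg_S hdisj hφS hv, hfib2], fun w hw => ?_⟩
      have : w ∈ F.neighborSet v := hw
      rw [hF, nb_S hdisj hφS hv] at this
      obtain ⟨i, hi, rfl⟩ := Finset.mem_image.1 (Finset.mem_coe.1 this)
      exact deg_W hdisj hφS i.2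
  rw [SCF.countK12, hset, Set.ncard_coe_finset]

lemma card_S2 (hφS' : ∀ i, φ i ∈ nbr G Wst)
    (hfib : ∀ s ∈ nbr G Wst, 1 ≤ (FIB Wst φ s).card ∧ (FIB Wst φ s).card ≤ 2) :
    (nbr G Wst).card + ((nbr G Wst).filter (fun s => (FIB Wst φ s).card = 2)).card
      = Wst.card := by
  classical
  have hW : Wst.card = ∑ b ∈ nbr G Wst, (FIB Wst φ b).card := by
    rw [← Fintype.card_coe, ← Finset.card_univ]
    exact Finset.card_eq_sum_card_fiberwise (fun i _ => hφS' i)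
  have hsplit := Finset.sum_filter_add_sum_filter_not (nbr G Wst)
    (fun s => (FIB Wst φ s).card = 2) (fun s => (FIB Wst φ s).card)
  have h2 : ∑ s ∈ (nbr G Wst).filter (fun s => (FIB Wst φ s).card = 2),
      (FIB Wst φ s).card
      = 2 * ((nbr G Wst).filter (fun s => (FIB Wst φ s).card = 2)).card := by
    rw [Finset.sum_congr rfl (fun s hs => (Finset.mem_filter.1 hs).2), Finset.sum_const,
      smul_eq_mul, mul_comm]
  have h1 : ∑ s ∈ (nbr G Wst).filter (fun s => ¬ (FIB Wst φ s).card = 2),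
      (FIB Wst φ s).card
      = ((nbr G Wst).filter (fun s => ¬ (FIB Wst φ s).card = 2)).card := by
    rw [Finset.sum_congr rfl (fun s hs => ?_), Finset.sum_const, smul_eq_mul, mul_one]
    have hm := Finset.mem_filter.1 hs
    have := hfib s hm.1
    omega
  have hcards := Finset.card_filter_add_card_filter_not (s := nbr G Wst)
    (p := fun s => (FIB Wst φ s).card = 2)
  omega

end Build
theorem main (G : SimpleGraph V) [DecidableRel G.Adj]
    (H2 : ∀ B : Finset V, Ind G B → B.card ≤ 2 * (nbr G B).card) :
    ∃ (F : SimpleGraph V) (W : Finset V), Ind G W ∧ SCF.IsK11K12CycleFactor G F ∧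
      SCF.countK12 F + (nbr G W).card = W.card := by
  classical
  obtain ⟨Wst, hInd, hmax⟩ := exists_max (G := G)
  have hdisj := W_disj_S Wst hInd
  obtain ⟨φ, hφadj, hφS, hfib⟩ := exists_phi Wst hInd hmax H2
  obtain ⟨e, headj⟩ := exists_sigma Wst hInd hmax
  have hfib' : ∀ s ∈ nbr G Wst, 1 ≤ (FIB Wst φ s).card ∧ (FIB Wst φ s).card ≤ 2 := hfib
  refine ⟨Fac G Wst φ e, Wst, hInd, ⟨fac_le hφadj headj, ?_⟩, ?_⟩
  · intro v
    rcases tricho (G := G) (Wst := Wst) v with hv | hv | hv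
    · rcases comp_star hdisj hφS (Or.inl hv) hfib' with hc | hc
      · exact Or.inl hc
      · exact Or.inr (Or.inl hc)
    · rcases comp_star hdisj hφS (Or.inr hv) hfib' with hc | hc
      · exact Or.inl hc
      · exact Or.inr (Or.inl hc)
    · rcases comp_V hdisj hφS headj hv with hc | hc
      · exact Or.inl hc
      · exact Or.inr (Or.inr hc)
  · rw [countK12_eq hdisj hφS headj hfib']
    have := card_S2 hφS hfib'
    omega

end Stmt10Aux

open SCF
open Stmt10Aux

/-- if `0 < n ≤ m ≤ 2n` and `iso(G-S) ≤ (m/n)|S|` for all `S`, then `G` has a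
`{K_{1,1}, K_{1,2}, C_m : m ≥ 3}`-factor with at most `((m-n)/(m+n))|V(G)|`
components isomorphic to `K_{1,2}`. -/
theorem stmt10 {V : Type*} [Fintype V] (G : SimpleGraph V) (n m : ℕ)
    (hn : 0 < n) (hnm : n ≤ m) (hm2n : m ≤ 2 * n)
    (h : ∀ S : Set V, (iso G S : ℝ) ≤ ((m : ℝ) / (n : ℝ)) * (S.ncard : ℝ)) :
    ∃ F, IsK11K12CycleFactor G F ∧
      (countK12 F : ℝ) ≤ (((m : ℝ) - (n : ℝ)) / ((m : ℝ) + (n : ℝ))) * (Fintype.card V : ℝ) := by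
  classical
  letI : DecidableEq V := Classical.decEq V
  letI : DecidableRel G.Adj := Classical.decRel _
  have hn' : (0 : ℝ) < n := by exact_mod_cast hn
  -- independent sets vs iso
  have hiso : ∀ B : Finset V, Ind G B → (B.card : ℕ) ≤ iso G ↑(nbr G B) := by
    intro B hB
    rw [iso]
    have hsub : (↑B : Set V) ⊆ {v | v ∉ ↑(nbr G B) ∧ ∀ w, G.Adj v w → w ∈ ↑(nbr G B)} := by
      intro b hb
      constructor
      · intro hbn
        obtain ⟨w, hw, hadj⟩ := mem_nbr.1 (Finset.mem_coe.1 hbn)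
        exact hB w hw b hb hadj
      · intro w hadj
        exact Finset.mem_coe.2 (mem_nbr.2 ⟨b, hb, hadj⟩)
    calc (B.card : ℕ) = (↑B : Set V).ncard := (Set.ncard_coe_finset B).symm
      _ ≤ _ := Set.ncard_le_ncard hsub (Set.toFinite _)
  have H2 : ∀ B : Finset V, Ind G B → B.card ≤ 2 * (nbr G B).card := by
    intro B hB
    have h1 := h ↑(nbr G B)
    rw [Set.ncard_coe_finset] at h1
    have h2 : ((iso G ↑(nbr G B) : ℕ) : ℝ) ≤ 2 * ((nbr G B).card : ℝ) := by
      apply le_trans h1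
      apply mul_le_mul_of_nonneg_right _ (by positivity)
      rw [div_le_iff₀ hn']
      exact_mod_cast hm2n
    have h3 := hiso B hB
    have : (B.card : ℝ) ≤ 2 * ((nbr G B).card : ℝ) := by
      exact le_trans (by exact_mod_cast h3) h2
    exact_mod_cast this
  obtain ⟨F, Wst, hInd, hFac, hcount⟩ := main G H2
  refine ⟨F, hFac, ?_⟩
  -- final arithmetic
  set t := countK12 F with ht
  set Sc := (nbr G Wst).card with hSc
  have hWc : t + Sc = Wst.card := hcount
  have hisoW : (Wst.card : ℝ) ≤ (iso G ↑(nbr G Wst) : ℝ) := by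
    exact_mod_cast hiso Wst hInd
  have hiso2 : (iso G ↑(nbr G Wst) : ℝ) ≤ (m : ℝ) / n * Sc := by
    have := h ↑(nbr G Wst)
    rwa [Set.ncard_coe_finset] at this
  have hnt : (n : ℝ) * t ≤ ((m : ℝ) - n) * Sc := by
    have hchain : (Wst.card : ℝ) ≤ (m : ℝ) / n * Sc := le_trans hisoW hiso2
    have hW' : (Wst.card : ℝ) = t + Sc := by exact_mod_cast hWc.symm
    rw [hW'] at hchain
    have h4 : (n:ℝ) * ((t:ℝ) + Sc) ≤ (m:ℝ) * Sc := by
      calc (n:ℝ) * ((t:ℝ) + Sc) ≤ n * (m / n * Sc) := mul_le_mul_of_nonneg_left hchain (le_of_lt hn')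
        _ = m * Sc := by field_simp
    linarith [h4]
  have hVcard : (Wst.card : ℝ) + Sc ≤ (Fintype.card V : ℝ) := by
    have hdisj := W_disj_S Wst hInd
    have : Wst.card + (nbr G Wst).card ≤ Fintype.card V := by
      rw [← Finset.card_union_of_disjoint hdisj, ← Finset.card_univ]
      exact Finset.card_le_card (Finset.subset_univ _)
    exact_mod_cast this
  have hmn : (0:ℝ) ≤ (m:ℝ) - n := by
    have : (n:ℝ) ≤ m := by exact_mod_cast hnm
    linarith
  rw [div_mul_eq_mul_div, le_div_iff₀ (by positivity)]
  have hVge : 2 * (Sc:ℝ) + t ≤ (Fintype.card V : ℝ) := by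
    have : (Wst.card : ℝ) = t + Sc := by exact_mod_cast hWc.symm
    linarith
  calc (t:ℝ) * ((m:ℝ) + n) = 2 * ((n:ℝ) * t) + ((m:ℝ) - n) * t := by ring
    _ ≤ 2 * (((m:ℝ) - n) * Sc) + ((m:ℝ) - n) * t := by linarith
    _ = ((m:ℝ) - n) * (2 * Sc + t) := by ring
    _ ≤ ((m:ℝ) - n) * (Fintype.card V : ℝ) := mul_le_mul_of_nonneg_left hVge hmn
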